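/- Under exponential dichotomy estimates ‖e^{−A(t−s)}Px‖ ≤ M₁ e^{β(t−s)}‖x‖ (t < s) and ‖e^{−A(t−s)}(I−P)x‖ ≤ M₁ e^{−β(t−s)}(1 + (t−s)^{−α})‖x‖ (t > s), if φ : ℝ → X is bounded continuous and almost periodic, then the function F(t) = ∫_{−∞}^t e^{−A(t−s)}(I−P)φ(s) ds − ∫_t^∞ e^{−A(t−s)}Pφ(s) ds is almost periodic, with: for any δ-almost-period σ of φ, ‖F(t+σ) − F(t)‖ ≤ δ M₁ (2β^{−1} + β^{α−1}Γ(1−α)) for all t. -/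

import Mathlib

open MeasureTheory

def AlmostPeriodic {X : Type*} [NormedAddCommGroup X] (g : ℝ → X) : Prop :=
  Continuous g ∧ ∀ δ : ℝ, 0 < δ → ∃ l : ℝ, 0 < l ∧ ∀ a : ℝ,
    ∃ s ∈ Set.Icc a (a + l), ∀ t : ℝ, ‖g (t + s) - g t‖ < δ

section Aux

variable {X : Type*} [NormedAddCommGroup X] [NormedSpace ℝ X] [CompleteSpace X]

lemma apAux_mp (t : ℝ) : MeasurePreserving (fun x : ℝ => t - x) volume volume :=
  MeasureTheory.Measure.measurePreserving_sub_left volume t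

lemma apAux_emb (t : ℝ) : MeasurableEmbedding (fun x : ℝ => t - x) :=
  (MeasurableEquiv.subLeft t).measurableEmbedding

lemma apAux_pre_Ici (t : ℝ) : (fun x : ℝ => t - x) ⁻¹' Set.Ici 0 = Set.Iic t := by
  ext x; simp [sub_nonneg]

lemma apAux_pre_Iic (t : ℝ) : (fun x : ℝ => t - x) ⁻¹' Set.Iic 0 = Set.Ici t := by
  ext x; simp [sub_nonpos]

lemma apAux_int_Iic (f : ℝ → X) (t : ℝ) :
    ∫ s in Set.Iic t, f (t - s) = ∫ r in Set.Ici (0:ℝ), f r := by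
  rw [← apAux_pre_Ici t]
  exact (apAux_mp t).setIntegral_preimage_emb (apAux_emb t) f _

lemma apAux_int_Ici (f : ℝ → X) (t : ℝ) :
    ∫ s in Set.Ici t, f (t - s) = ∫ r in Set.Iic (0:ℝ), f r := by
  rw [← apAux_pre_Iic t]
  exact (apAux_mp t).setIntegral_preimage_emb (apAux_emb t) f _

lemma apAux_integrable_Iic (f : ℝ → X) (t : ℝ) :
    IntegrableOn (fun s => f (t - s)) (Set.Iic t) ↔ IntegrableOn f (Set.Ici 0) := by
  rw [← apAux_pre_Ici t]
  exact (apAux_mp t).integrableOn_comp_preimage (apAux_emb t)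

lemma apAux_integrable_Ici (f : ℝ → X) (t : ℝ) :
    IntegrableOn (fun s => f (t - s)) (Set.Ici t) ↔ IntegrableOn f (Set.Iic 0) := by
  rw [← apAux_pre_Iic t]
  exact (apAux_mp t).integrableOn_comp_preimage (apAux_emb t)

end Aux

lemma apAux_exp_val {β : ℝ} (hβ : 0 < β) :
    ∫ r in Set.Ioi (0:ℝ), Real.exp (-β * r) = 1 / β := by
  have h := Real.integral_rpow_mul_exp_neg_mul_Ioi (one_pos) hβ
  simpa [Real.rpow_one, Real.Gamma_one, neg_mul] using h

lemma apAux_gam_int {β α : ℝ} (hβ : 0 < β) (hα1 : α < 1) :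
    IntegrableOn (fun r : ℝ => Real.exp (-β * r) * r ^ (-α)) (Set.Ioi 0) := by
  have h := integrableOn_rpow_mul_exp_neg_mul_rpow (p := 1) (s := -α) (b := β)
    (by linarith) one_pos hβ
  exact h.congr_fun (fun x _ => by beta_reduce; rw [Real.rpow_one, mul_comm]) measurableSet_Ioi

lemma apAux_gam_val {β α : ℝ} (hβ : 0 < β) (hα1 : α < 1) :
    ∫ r in Set.Ioi (0:ℝ), Real.exp (-β * r) * r ^ (-α)
      = β ^ (α - 1) * Real.Gamma (1 - α) := by
  have h := Real.integral_rpow_mul_exp_neg_mul_Ioi (a := 1 - α) (sub_pos.mpr hα1) hβ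
  rw [show (1:ℝ) - α - 1 = -α by ring] at h
  rw [one_div, Real.inv_rpow hβ.le, ← Real.rpow_neg hβ.le, neg_sub] at h
  rw [← h]
  exact setIntegral_congr_fun measurableSet_Ioi fun x _ => by rw [neg_mul, mul_comm]

theorem dichotomy_integral_almostPeriodic {X : Type*} [NormedAddCommGroup X]
    [NormedSpace ℝ X] [CompleteSpace X] (T : ℝ → X →L[ℝ] X) (P : X →L[ℝ] X)
    (M₁ β α : ℝ) (hM : 0 < M₁) (hβ : 0 < β) (hα0 : 0 ≤ α) (hα1 : α < 1)
    (hTc : ∀ x : X, Continuous fun r : ℝ => T r x)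
    (hP : ∀ r : ℝ, r < 0 → ∀ x : X, ‖T r (P x)‖ ≤ M₁ * Real.exp (β * r) * ‖x‖)
    (hQ : ∀ r : ℝ, 0 < r → ∀ x : X,
      ‖T r (x - P x)‖ ≤ M₁ * Real.exp (-β * r) * (1 + r ^ (-α)) * ‖x‖)
    (φ : BoundedContinuousFunction ℝ X) (hφ : AlmostPeriodic ⇑φ)
    (hint1 : ∀ t : ℝ, IntegrableOn (fun s => T (t - s) (φ s - P (φ s))) (Set.Iic t))
    (hint2 : ∀ t : ℝ, IntegrableOn (fun s => T (t - s) (P (φ s))) (Set.Ici t))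
    (F : ℝ → X)
    (hF : ∀ t : ℝ, F t = (∫ s in Set.Iic t, T (t - s) (φ s - P (φ s))) -
        ∫ s in Set.Ici t, T (t - s) (P (φ s))) :
    AlmostPeriodic F ∧
    ∀ δ σ : ℝ, 0 < δ → (∀ t : ℝ, ‖φ (t + σ) - φ t‖ ≤ δ) →
      ∀ t : ℝ, ‖F (t + σ) - F t‖
        ≤ δ * M₁ * (2 / β + β ^ (α - 1) * Real.Gamma (1 - α)) := by
  -- representation of the two integrals with domain independent of t
  have hrep1 : ∀ t : ℝ, (∫ s in Set.Iic t, T (t - s) (φ s - P (φ s)))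
      = ∫ r in Set.Ici (0:ℝ), T r (φ (t - r) - P (φ (t - r))) := by
    intro t
    rw [← apAux_int_Iic (fun r => T r (φ (t - r) - P (φ (t - r)))) t]
    exact setIntegral_congr_fun measurableSet_Iic fun s _ => by simp [sub_sub_cancel]
  have hrep2 : ∀ t : ℝ, (∫ s in Set.Ici t, T (t - s) (P (φ s)))
      = ∫ r in Set.Iic (0:ℝ), T r (P (φ (t - r))) := by
    intro t
    rw [← apAux_int_Ici (fun r => T r (P (φ (t - r)))) t]
    exact setIntegral_congr_fun measurableSet_Ici fun s _ => by simp [sub_sub_cancel]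
  have hi1 : ∀ t : ℝ,
      IntegrableOn (fun r => T r (φ (t - r) - P (φ (t - r)))) (Set.Ici 0) := by
    intro t
    rw [← apAux_integrable_Iic (fun r => T r (φ (t - r) - P (φ (t - r)))) t]
    exact (hint1 t).congr_fun (fun s _ => by simp [sub_sub_cancel]) measurableSet_Iic
  have hi2 : ∀ t : ℝ,
      IntegrableOn (fun r => T r (P (φ (t - r)))) (Set.Iic 0) := by
    intro t
    rw [← apAux_integrable_Ici (fun r => T r (P (φ (t - r)))) t]
    exact (hint2 t).congr_fun (fun s _ => by simp [sub_sub_cancel]) measurableSet_Ici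
  -- a.e. strict sign on the restricted measures
  have hne : ∀ᵐ r : ℝ, r ≠ (0:ℝ) := by
    refine ae_iff.mpr ?_
    simpa using (measure_singleton (0:ℝ) : (volume : Measure ℝ) {0} = 0)
  have ha0 : ∀ᵐ r ∂(volume.restrict (Set.Ici (0:ℝ))), (0:ℝ) < r := by
    filter_upwards [ae_restrict_mem measurableSet_Ici, ae_restrict_of_ae hne] with r h1 h2
    exact lt_of_le_of_ne h1 (Ne.symm h2)
  have hb0 : ∀ᵐ r ∂(volume.restrict (Set.Iic (0:ℝ))), r < 0 := by
    filter_upwards [ae_restrict_mem measurableSet_Iic, ae_restrict_of_ae hne] with r h1 h2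
    exact lt_of_le_of_ne h1 h2
  -- integrability and value of the bounding functions
  have hbQ_int : ∀ c : ℝ,
      IntegrableOn (fun r : ℝ => M₁ * Real.exp (-β * r) * (1 + r ^ (-α)) * c)
        (Set.Ici 0) := by
    intro c
    have h : IntegrableOn (fun r : ℝ => M₁ * c * Real.exp (-β * r)
        + M₁ * c * (Real.exp (-β * r) * r ^ (-α))) (Set.Ioi 0) :=
      ((exp_neg_integrableOn_Ioi 0 hβ).const_mul _).add ((apAux_gam_int hβ hα1).const_mul _)
    exact (Iff.mpr integrableOn_Ici_iff_integrableOn_Ioi)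
      (h.congr_fun (fun x _ => by ring) measurableSet_Ioi)
  have hbQ_val : ∀ c : ℝ,
      (∫ r in Set.Ici (0:ℝ), M₁ * Real.exp (-β * r) * (1 + r ^ (-α)) * c)
        = c * (M₁ * (1 / β + β ^ (α - 1) * Real.Gamma (1 - α))) := by
    intro c
    rw [integral_Ici_eq_integral_Ioi]
    have h : ∀ x ∈ Set.Ioi (0:ℝ), M₁ * Real.exp (-β * x) * (1 + x ^ (-α)) * c
        = M₁ * c * Real.exp (-β * x) + M₁ * c * (Real.exp (-β * x) * x ^ (-α)) := by
      intro x _; ring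
    rw [setIntegral_congr_fun measurableSet_Ioi h, integral_add
      (((exp_neg_integrableOn_Ioi 0 hβ).const_mul _))
      ((apAux_gam_int hβ hα1).const_mul _), integral_const_mul, integral_const_mul,
      apAux_exp_val hβ, apAux_gam_val hβ hα1]
    ring
  have hbP_int : ∀ c : ℝ,
      IntegrableOn (fun r : ℝ => M₁ * Real.exp (β * r) * c) (Set.Iic 0) := by
    intro c
    have h : IntegrableOn (fun r : ℝ => Real.exp (β * r)) (Set.Iic 0) := by
      have h0 : IntegrableOn (fun x : ℝ => Real.exp (-β * x)) (Set.Ici 0) :=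
        (Iff.mpr integrableOn_Ici_iff_integrableOn_Ioi) (exp_neg_integrableOn_Ioi 0 hβ)
      have := (Measure.measurePreserving_neg (volume : Measure ℝ)).integrableOn_comp_preimage
        ((Homeomorph.neg ℝ).isClosedEmbedding.measurableEmbedding)
        (f := fun x : ℝ => Real.exp (-β * x)) (s := Set.Ici 0)
      rw [show (Neg.neg ⁻¹' Set.Ici 0 : Set ℝ) = Set.Iic 0 by ext x; simp] at this
      exact (this.mpr h0).congr_fun
        (fun x _ => by simp [Function.comp, neg_mul_neg]) measurableSet_Iic
    exact (h.const_mul M₁).mul_const c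
  have hbP_val : ∀ c : ℝ,
      (∫ r in Set.Iic (0:ℝ), M₁ * Real.exp (β * r) * c) = c * (M₁ * (1 / β)) := by
    intro c
    have h : (∫ r in Set.Iic (0:ℝ), Real.exp (β * r)) = 1 / β := by
      have := integral_comp_neg_Ioi (0:ℝ) (fun x : ℝ => Real.exp (β * x))
      simp only [neg_zero, mul_neg] at this
      rw [← apAux_exp_val hβ, ← this]
      exact setIntegral_congr_fun measurableSet_Ioi fun x _ => by rw [neg_mul]
    have h2 : ∀ x ∈ Set.Iic (0:ℝ), M₁ * Real.exp (β * x) * c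
        = (M₁ * c) * Real.exp (β * x) := fun x _ => by ring
    rw [setIntegral_congr_fun measurableSet_Iic h2, integral_const_mul, h]
    ring
  -- the key quantitative estimate
  have hest : ∀ δ σ : ℝ, 0 < δ → (∀ u : ℝ, ‖φ (u + σ) - φ u‖ ≤ δ) →
      ∀ t : ℝ, ‖F (t + σ) - F t‖
        ≤ δ * M₁ * (2 / β + β ^ (α - 1) * Real.Gamma (1 - α)) := by
    intro δ σ hδ hσ t
    have e1 : F (t + σ) - F t
        = ((∫ r in Set.Ici (0:ℝ), T r (φ (t + σ - r) - P (φ (t + σ - r))))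
            - ∫ r in Set.Ici (0:ℝ), T r (φ (t - r) - P (φ (t - r))))
          - ((∫ r in Set.Iic (0:ℝ), T r (P (φ (t + σ - r))))
            - ∫ r in Set.Iic (0:ℝ), T r (P (φ (t - r)))) := by
      rw [hF, hF, hrep1, hrep1, hrep2, hrep2]; abel
    have hA : ‖(∫ r in Set.Ici (0:ℝ), T r (φ (t + σ - r) - P (φ (t + σ - r))))
        - ∫ r in Set.Ici (0:ℝ), T r (φ (t - r) - P (φ (t - r)))‖
        ≤ δ * (M₁ * (1 / β + β ^ (α - 1) * Real.Gamma (1 - α))) := by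
      rw [← integral_sub (hi1 (t + σ)) (hi1 t), ← hbQ_val δ]
      refine norm_integral_le_of_norm_le (hbQ_int δ) ?_
      filter_upwards [ha0] with r hr
      have harg : (φ (t + σ - r) - P (φ (t + σ - r))) - (φ (t - r) - P (φ (t - r)))
          = (φ (t + σ - r) - φ (t - r)) - P (φ (t + σ - r) - φ (t - r)) := by
        rw [P.map_sub]; abel
      rw [← (T r).map_sub, harg]
      have hnorm : ‖φ (t + σ - r) - φ (t - r)‖ ≤ δ := by
        have := hσ (t - r)
        rwa [show t - r + σ = t + σ - r by ring] at this
      calc ‖T r ((φ (t + σ - r) - φ (t - r)) - P (φ (t + σ - r) - φ (t - r)))‖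
          ≤ M₁ * Real.exp (-β * r) * (1 + r ^ (-α)) * ‖φ (t + σ - r) - φ (t - r)‖ :=
            hQ r hr _
        _ ≤ M₁ * Real.exp (-β * r) * (1 + r ^ (-α)) * δ := by
            refine mul_le_mul_of_nonneg_left hnorm ?_
            exact mul_nonneg (mul_nonneg hM.le (Real.exp_pos _).le)
              (add_nonneg zero_le_one (Real.rpow_nonneg hr.le _))
    have hB : ‖(∫ r in Set.Iic (0:ℝ), T r (P (φ (t + σ - r))))
        - ∫ r in Set.Iic (0:ℝ), T r (P (φ (t - r)))‖ ≤ δ * (M₁ * (1 / β)) := by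
      rw [← integral_sub (hi2 (t + σ)) (hi2 t), ← hbP_val δ]
      refine norm_integral_le_of_norm_le (hbP_int δ) ?_
      filter_upwards [hb0] with r hr
      rw [← (T r).map_sub, ← P.map_sub]
      have hnorm : ‖φ (t + σ - r) - φ (t - r)‖ ≤ δ := by
        have := hσ (t - r)
        rwa [show t - r + σ = t + σ - r by ring] at this
      calc ‖T r (P (φ (t + σ - r) - φ (t - r)))‖
          ≤ M₁ * Real.exp (β * r) * ‖φ (t + σ - r) - φ (t - r)‖ := hP r hr _
        _ ≤ M₁ * Real.exp (β * r) * δ := by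
            refine mul_le_mul_of_nonneg_left hnorm ?_
            exact mul_nonneg hM.le (Real.exp_pos _).le
    calc ‖F (t + σ) - F t‖ ≤ _ + _ := by rw [e1]; exact norm_sub_le _ _
      _ ≤ δ * (M₁ * (1 / β + β ^ (α - 1) * Real.Gamma (1 - α))) + δ * (M₁ * (1 / β)) :=
          add_le_add hA hB
      _ = δ * M₁ * (2 / β + β ^ (α - 1) * Real.Gamma (1 - α)) := by ring
  -- continuity of F
  have hφb : ∀ u : ℝ, ‖φ u‖ ≤ ‖φ‖ := fun u => φ.norm_coe_le_norm u
  have c1 : Continuous fun t : ℝ =>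
      ∫ r in Set.Ici (0:ℝ), T r (φ (t - r) - P (φ (t - r))) := by
    refine continuous_of_dominated (fun t => (hi1 t).aestronglyMeasurable) ?_
      (hbQ_int ‖φ‖) ?_
    · intro t
      filter_upwards [ha0] with r hr
      calc ‖T r (φ (t - r) - P (φ (t - r)))‖
          ≤ M₁ * Real.exp (-β * r) * (1 + r ^ (-α)) * ‖φ (t - r)‖ := hQ r hr _
        _ ≤ M₁ * Real.exp (-β * r) * (1 + r ^ (-α)) * ‖φ‖ := by
            refine mul_le_mul_of_nonneg_left (hφb _) ?_
            exact mul_nonneg (mul_nonneg hM.le (Real.exp_pos _).le)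
              (add_nonneg zero_le_one (Real.rpow_nonneg hr.le _))
    · refine Filter.Eventually.of_forall fun r => ?_
      have hφc : Continuous fun t : ℝ => φ (t - r) :=
        φ.continuous.comp (continuous_id.sub continuous_const)
      exact (T r).continuous.comp (hφc.sub (P.continuous.comp hφc))
  have c2 : Continuous fun t : ℝ => ∫ r in Set.Iic (0:ℝ), T r (P (φ (t - r))) := by
    refine continuous_of_dominated (fun t => (hi2 t).aestronglyMeasurable) ?_
      (hbP_int ‖φ‖) ?_
    · intro t
      filter_upwards [hb0] with r hr
      calc ‖T r (P (φ (t - r)))‖ ≤ M₁ * Real.exp (β * r) * ‖φ (t - r)‖ := hP r hr _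
        _ ≤ M₁ * Real.exp (β * r) * ‖φ‖ := by
            refine mul_le_mul_of_nonneg_left (hφb _) ?_
            exact mul_nonneg hM.le (Real.exp_pos _).le
    · refine Filter.Eventually.of_forall fun r => ?_
      have hφc : Continuous fun t : ℝ => φ (t - r) :=
        φ.continuous.comp (continuous_id.sub continuous_const)
      exact (T r).continuous.comp (P.continuous.comp hφc)
  have hFc : Continuous F := by
    refine (c1.sub c2).congr fun t => ?_
    rw [hF, hrep1, hrep2]; rfl
  -- almost periodicity
  have hKpos : 0 < M₁ * (2 / β + β ^ (α - 1) * Real.Gamma (1 - α)) := by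
    have hg : 0 < Real.Gamma (1 - α) := Real.Gamma_pos_of_pos (by linarith)
    have hb : 0 < β ^ (α - 1) := Real.rpow_pos_of_pos hβ _
    have h2 : 0 < 2 / β := by positivity
    exact mul_pos hM (add_pos h2 (mul_pos hb hg))
  refine ⟨⟨hFc, ?_⟩, fun δ σ hδ hσ t => hest δ σ hδ hσ t⟩
  intro δ hδ
  set K := M₁ * (2 / β + β ^ (α - 1) * Real.Gamma (1 - α)) with hK
  have hδ' : 0 < δ / (2 * K) := by positivity
  obtain ⟨l, hl, hap⟩ := hφ.2 (δ / (2 * K)) hδ'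
  refine ⟨l, hl, fun a => ?_⟩
  obtain ⟨s, hs, hps⟩ := hap a
  refine ⟨s, hs, fun t => ?_⟩
  have h1 : ‖F (t + s) - F t‖ ≤ (δ / (2 * K)) * M₁
      * (2 / β + β ^ (α - 1) * Real.Gamma (1 - α)) :=
    hest _ s hδ' (fun u => (hps u).le) t
  have h2 : (δ / (2 * K)) * M₁ * (2 / β + β ^ (α - 1) * Real.Gamma (1 - α))
      = δ / 2 := by
    have hK0 : K ≠ 0 := hKpos.ne'
    calc (δ / (2 * K)) * M₁ * (2 / β + β ^ (α - 1) * Real.Gamma (1 - α))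
        = δ / (2 * K) * K := by rw [hK]; ring
      _ = δ / 2 := by field_simp
  calc ‖F (t + s) - F t‖ ≤ δ / 2 := by rw [← h2]; exact h1
    _ < δ := by linarith
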